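/- Let h > 0 and let c : ℝ → ℝ be a C² function with compact support contained in an interval of length h. Then ‖c‖_{L²(ℝ)} ≤ (h²/π²) ‖c''‖_{L²(ℝ)}. -/

import Mathlib

open MeasureTheory

private lemma vanish_outside' {u : ℝ → ℝ} (hu : Continuous u) {p q : ℝ}
    (hs : Function.support u ⊆ Set.Icc p q) {x : ℝ} (hx : x ∉ Set.Ioo p q) : u x = 0 := by
  have hcl : IsClosed {y : ℝ | u y = 0} := isClosed_eq hu continuous_const
  have h1 : Set.Iic p ⊆ {y : ℝ | u y = 0} := by
    rw [← closure_Iio]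
    refine closure_minimal (fun y hy => ?_) hcl
    by_contra hne
    exact absurd (hs hne).1 (not_le.mpr hy)
  have h2 : Set.Ici q ⊆ {y : ℝ | u y = 0} := by
    rw [← closure_Ioi]
    refine closure_minimal (fun y hy => ?_) hcl
    by_contra hne
    exact absurd (hs hne).2 (not_le.mpr hy)
  rcases not_and_or.mp hx with h | h
  · exact h1 (not_lt.mp h)
  · exact h2 (not_lt.mp h)

private lemma parseval_interval' {T : ℝ} [hT : Fact (0 < T)] {a0 : ℝ} {u : ℝ → ℂ}
    (hu : Continuous u) (hend : u a0 = u (a0 + T)) :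
    HasSum (fun n : ℤ => ‖fourierCoeffOn (lt_add_of_pos_right a0 hT.out) u n‖ ^ 2)
      ((1 / T) * ∫ x in a0..(a0 + T), ‖u x‖ ^ 2) := by
  set F0 : C(AddCircle T, ℂ) :=
    ⟨AddCircle.liftIco T a0 u, AddCircle.liftIco_continuous hend hu.continuousOn⟩ with hF0
  set F : Lp ℂ 2 (@AddCircle.haarAddCircle T hT) :=
    ContinuousMap.toLp (E := ℂ) 2 AddCircle.haarAddCircle ℂ F0 with hF
  have hcoeff : ∀ n : ℤ, fourierCoeff F n = fourierCoeffOn (lt_add_of_pos_right a0 hT.out) u n := by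
    intro n
    rw [hF, fourierCoeff_toLp]
    exact fourierCoeff_liftIco_eq u n
  have hsum : Summable (fun n : ℤ => ‖fourierCoeff F n‖ ^ 2) := by
    have hmem := lp.memℓp (fourierBasis.repr F)
    rw [memℓp_gen_iff (by norm_num : (0:ℝ) < (2 : ENNReal).toReal)] at hmem
    have : (fun n : ℤ => ‖fourierCoeff F n‖ ^ 2)
        = fun n : ℤ => ‖fourierBasis.repr F n‖ ^ ((2 : ENNReal).toReal) := by
      ext n
      rw [fourierBasis_repr]
      norm_num [Real.rpow_natCast]
    rw [this]
    exact hmem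
  have htsum := tsum_sq_fourierCoeff F
  have hval : (∫ t : AddCircle T, ‖F t‖ ^ 2 ∂AddCircle.haarAddCircle)
      = (1 / T) * ∫ x in a0..(a0 + T), ‖u x‖ ^ 2 := by
    have step1 : (∫ t : AddCircle T, ‖F t‖ ^ 2 ∂AddCircle.haarAddCircle)
        = ∫ t : AddCircle T, ‖F0 t‖ ^ 2 ∂AddCircle.haarAddCircle := by
      apply integral_congr_ae
      filter_upwards [ContinuousMap.coeFn_toLp (p := 2) AddCircle.haarAddCircle (𝕜 := ℂ) F0]
        with t ht
      rw [hF]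
      rw [ht]
    have step2 := AddCircle.intervalIntegral_preimage T a0 (fun z => ‖F0 z‖ ^ 2)
    rw [AddCircle.volume_eq_smul_haarAddCircle, integral_smul_measure,
      ENNReal.toReal_ofReal hT.out.le] at step2
    have step3 : (∫ x in a0..(a0 + T), ‖F0 (x : AddCircle T)‖ ^ 2)
        = ∫ x in a0..(a0 + T), ‖u x‖ ^ 2 := by
      simp_rw [intervalIntegral.integral_of_le (lt_add_of_pos_right a0 hT.out).le]
      rw [integral_Ioc_eq_integral_Ioo, integral_Ioc_eq_integral_Ioo]
      refine setIntegral_congr_fun measurableSet_Ioo fun x hx => ?_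
      rw [hF0]
      simp only [ContinuousMap.coe_mk]
      rw [AddCircle.liftIco_coe_apply (Set.Ioo_subset_Ico_self hx)]
    rw [step1, ← step3, step2, smul_eq_mul]
    rw [← mul_assoc, one_div_mul_cancel hT.out.ne', one_mul]
  have : HasSum (fun n : ℤ => ‖fourierCoeff F n‖ ^ 2)
      ((1 / T) * ∫ x in a0..(a0 + T), ‖u x‖ ^ 2) := by
    rw [← hval, ← htsum]
    exact hsum.hasSum
  simpa only [hcoeff] using this

private lemma coeff_step' {a0 b0 : ℝ} (hab : a0 < b0) {u u' : ℝ → ℂ} {n : ℤ} (hn : n ≠ 0)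
    (hu : ∀ x, HasDerivAt u (u' x) x) (hu' : Continuous u')
    (h0 : u a0 = 0) (h1 : u b0 = 0) :
    ‖fourierCoeffOn hab u n‖
      = (b0 - a0) / (2 * Real.pi * |(n : ℝ)|) * ‖fourierCoeffOn hab u' n‖ := by
  have key := fourierCoeffOn_of_hasDerivAt hab hn (fun x _ => hu x)
    (hu'.intervalIntegrable a0 b0)
  rw [h0, h1, sub_zero, mul_zero, zero_sub] at key
  rw [key]
  rw [norm_mul, norm_neg, norm_mul, norm_div, norm_one, ← Complex.ofReal_sub]
  simp only [norm_mul, norm_neg, Complex.norm_real, Complex.norm_I, Complex.norm_intCast,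
    Real.norm_eq_abs, Complex.norm_ofNat, mul_one]
  rw [abs_of_pos Real.pi_pos, abs_of_pos (by linarith : (0:ℝ) < b0 - a0)]
  ring

theorem stmt_7 (h : ℝ) (hh : 0 < h) (c : ℝ → ℝ) (hc : ContDiff ℝ 2 c)
    (hcpt : HasCompactSupport c)
    (a : ℝ) (hsupp : Function.support c ⊆ Set.Icc a (a + h)) :
    Real.sqrt (∫ t, (c t) ^ 2) ≤
      (h ^ 2 / Real.pi ^ 2) * Real.sqrt (∫ t, (deriv (deriv c) t) ^ 2) := by
  have hπ := Real.pi_pos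
  haveI hT : Fact ((0:ℝ) < 2 * h) := ⟨by linarith⟩
  have hab : a - h < a - h + 2 * h := by linarith
  -- smoothness
  have hdc : Differentiable ℝ c := hc.differentiable (by norm_num)
  have hc1 : ContDiff ℝ 1 (deriv c) := by
    have h2 : ContDiff ℝ ((1 : ℕ) + 1) c := by exact_mod_cast hc
    exact ((contDiff_succ_iff_deriv).mp h2).2.2
  have hdc' : Differentiable ℝ (deriv c) := hc1.differentiable (by norm_num)
  have hcont0 : Continuous c := hc.continuous
  have hcont1 : Continuous (deriv c) := hdc'.continuous
  have hcont2 : Continuous (deriv (deriv c)) := hc1.continuous_deriv le_rfl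
  -- supports
  have hts : tsupport c ⊆ Set.Icc a (a + h) := closure_minimal hsupp isClosed_Icc
  have hs1 : Function.support (deriv c) ⊆ Set.Icc a (a + h) := support_deriv_subset.trans hts
  have hts1 : tsupport (deriv c) ⊆ Set.Icc a (a + h) := closure_minimal hs1 isClosed_Icc
  have hs2 : Function.support (deriv (deriv c)) ⊆ Set.Icc a (a + h) :=
    support_deriv_subset.trans hts1
  -- vanishing
  have v0 : ∀ x, x ∉ Set.Ioo a (a + h) → c x = 0 := fun x hx => vanish_outside' hcont0 hsupp hx
  have v1 : ∀ x, x ∉ Set.Ioo a (a + h) → deriv c x = 0 :=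
    fun x hx => vanish_outside' hcont1 hs1 hx
  have v2 : ∀ x, x ∉ Set.Ioo a (a + h) → deriv (deriv c) x = 0 :=
    fun x hx => vanish_outside' hcont2 hs2 hx
  have hnotlo : (a - h) ∉ Set.Ioo a (a + h) := fun hx => absurd hx.1 (by linarith)
  have hnothi : (a + h) ∉ Set.Ioo a (a + h) := fun hx => absurd hx.2 (lt_irrefl _)
  -- the odd reflection (complex valued)
  set g : ℝ → ℂ := fun t => (c t : ℂ) - (c (2 * a - t) : ℂ) with hgdef
  set g1 : ℝ → ℂ := fun t =>
    Complex.ofReal (deriv c t) + Complex.ofReal (deriv c (2 * a - t)) with hg1def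
  set g2 : ℝ → ℂ := fun t =>
    Complex.ofReal (deriv (deriv c) t) -
      Complex.ofReal (deriv (deriv c) (2 * a - t)) with hg2def
  have hrefl : ∀ x : ℝ, HasDerivAt (fun t : ℝ => 2 * a - t) (-1) x := by
    intro x
    simpa using (hasDerivAt_id x).const_sub (2 * a)
  have hgd : ∀ x, HasDerivAt g (g1 x) x := by
    intro x
    have h1 : HasDerivAt (fun t : ℝ => (c t : ℂ)) (Complex.ofReal (deriv c x)) x :=
      ((hdc x).hasDerivAt).ofReal_comp
    have h2r : HasDerivAt (fun t : ℝ => c (2 * a - t)) (deriv c (2 * a - x) * (-1)) x :=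
      ((hdc (2 * a - x)).hasDerivAt).comp x (hrefl x)
    have h2 : HasDerivAt (fun t : ℝ => (c (2 * a - t) : ℂ))
        (Complex.ofReal (deriv c (2 * a - x) * (-1))) x := h2r.ofReal_comp
    have := h1.sub h2
    simp only [hg1def, mul_neg_one, Complex.ofReal_neg, sub_neg_eq_add] at this ⊢
    exact this
  have hg1d : ∀ x, HasDerivAt g1 (g2 x) x := by
    intro x
    have h1 : HasDerivAt (fun t : ℝ => Complex.ofReal (deriv c t))
        (Complex.ofReal (deriv (deriv c) x)) x :=
      ((hdc' x).hasDerivAt).ofReal_comp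
    have h2r : HasDerivAt (fun t : ℝ => deriv c (2 * a - t))
        (deriv (deriv c) (2 * a - x) * (-1)) x :=
      ((hdc' (2 * a - x)).hasDerivAt).comp x (hrefl x)
    have h2 : HasDerivAt (fun t : ℝ => Complex.ofReal (deriv c (2 * a - t)))
        (Complex.ofReal (deriv (deriv c) (2 * a - x) * (-1))) x := h2r.ofReal_comp
    have := h1.add h2
    simp only [hg2def, mul_neg_one, Complex.ofReal_neg, ← sub_eq_add_neg] at this ⊢
    exact this
  have hgc : Continuous g := by
    apply Continuous.sub
    · exact Complex.continuous_ofReal.comp hcont0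
    · exact Complex.continuous_ofReal.comp (hcont0.comp (continuous_const.sub continuous_id))
  have hg1c : Continuous g1 := by
    apply Continuous.add
    · exact Complex.continuous_ofReal.comp hcont1
    · exact Complex.continuous_ofReal.comp (hcont1.comp (continuous_const.sub continuous_id))
  have hg2c : Continuous g2 := by
    apply Continuous.sub
    · exact Complex.continuous_ofReal.comp hcont2
    · exact Complex.continuous_ofReal.comp (hcont2.comp (continuous_const.sub continuous_id))
  -- endpoint values
  have cva : c (a - h) = 0 := v0 _ hnotlo
  have cvb : c (a + h) = 0 := v0 _ hnothi
  have c1va : deriv c (a - h) = 0 := v1 _ hnotlo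
  have c1vb : deriv c (a + h) = 0 := v1 _ hnothi
  have c2va : deriv (deriv c) (a - h) = 0 := v2 _ hnotlo
  have c2vb : deriv (deriv c) (a + h) = 0 := v2 _ hnothi
  have er1 : 2 * a - (a - h) = a + h := by ring
  have er2 : 2 * a - (a - h + 2 * h) = a - h := by ring
  have hg_a0 : g (a - h) = 0 := by
    simp only [hgdef, er1, cva, cvb, Complex.ofReal_zero, sub_zero]
  have hg_b0 : g (a - h + 2 * h) = 0 := by
    simp only [hgdef, er2]
    rw [show a - h + 2 * h = a + h by ring, cvb, cva]
    simp
  have hg1_a0 : g1 (a - h) = 0 := by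
    simp only [hg1def, er1, c1va, c1vb, Complex.ofReal_zero, add_zero]
  have hg1_b0 : g1 (a - h + 2 * h) = 0 := by
    simp only [hg1def, er2]
    rw [show a - h + 2 * h = a + h by ring, c1vb, c1va]
    simp
  have hg2_a0 : g2 (a - h) = 0 := by
    simp only [hg2def, er1, c2va, c2vb, Complex.ofReal_zero, sub_zero]
  have hg2_b0 : g2 (a - h + 2 * h) = 0 := by
    simp only [hg2def, er2]
    rw [show a - h + 2 * h = a + h by ring, c2vb, c2va]
    simp
  -- the zero coefficient vanishes (odd symmetry)
  have hzero : fourierCoeffOn hab g 0 = 0 := by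
    rw [fourierCoeffOn_eq_integral]
    simp only [neg_zero, fourier_zero, one_smul]
    have hint : (∫ x in (a - h)..(a - h + 2 * h), g x)
        = (∫ x in (a - h)..(a - h + 2 * h), (c x : ℂ))
          - ∫ x in (a - h)..(a - h + 2 * h), (c (2 * a - x) : ℂ) := by
      rw [← intervalIntegral.integral_sub]
      · exact (Complex.continuous_ofReal.comp hcont0).intervalIntegrable _ _
      · exact (Complex.continuous_ofReal.comp
          (hcont0.comp (continuous_const.sub continuous_id))).intervalIntegrable _ _
    have hflip : (∫ x in (a - h)..(a - h + 2 * h), (c (2 * a - x) : ℂ))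
        = ∫ x in (a - h)..(a - h + 2 * h), (c x : ℂ) := by
      rw [intervalIntegral.integral_comp_sub_left (fun x => (c x : ℂ)) (2 * a)]
      rw [show 2 * a - (a - h + 2 * h) = a - h by ring,
        show 2 * a - (a - h) = a - h + 2 * h by ring]
    rw [hint, hflip, sub_self, smul_zero]
  -- coefficient inequality
  have hKnn : (0:ℝ) ≤ h ^ 2 / Real.pi ^ 2 := by positivity
  have hbound : ∀ n : ℤ, ‖fourierCoeffOn hab g n‖ ^ 2
      ≤ (h ^ 2 / Real.pi ^ 2) ^ 2 * ‖fourierCoeffOn hab g2 n‖ ^ 2 := by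
    intro n
    rcases eq_or_ne n 0 with rfl | hn
    · rw [hzero]
      simp only [norm_zero, ne_eq, OfNat.ofNat_ne_zero, not_false_eq_true, zero_pow]
      positivity
    · have habs : (1:ℝ) ≤ |(n : ℝ)| := by
        rw [← Int.cast_abs]
        exact_mod_cast Int.one_le_abs hn
      have habs0 : (0:ℝ) < |(n : ℝ)| := lt_of_lt_of_le one_pos habs
      have s1 : ‖fourierCoeffOn hab g n‖
          = (a - h + 2 * h - (a - h)) / (2 * Real.pi * |(n : ℝ)|)
            * ‖fourierCoeffOn hab g1 n‖ :=
        coeff_step' hab hn hgd hg1c hg_a0 hg_b0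
      have s2 : ‖fourierCoeffOn hab g1 n‖
          = (a - h + 2 * h - (a - h)) / (2 * Real.pi * |(n : ℝ)|)
            * ‖fourierCoeffOn hab g2 n‖ :=
        coeff_step' hab hn hg1d hg2c hg1_a0 hg1_b0
      have hKn : (a - h + 2 * h - (a - h)) / (2 * Real.pi * |(n : ℝ)|) ≤ h / Real.pi := by
        rw [show a - h + 2 * h - (a - h) = 2 * h by ring]
        rw [div_le_div_iff₀ (by positivity) hπ]
        nlinarith [mul_le_mul_of_nonneg_left habs
          (by positivity : (0:ℝ) ≤ 2 * Real.pi * h)]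
      have hnn1 : (0:ℝ) ≤ (a - h + 2 * h - (a - h)) / (2 * Real.pi * |(n : ℝ)|) := by
        rw [show a - h + 2 * h - (a - h) = 2 * h by ring]
        positivity
      calc ‖fourierCoeffOn hab g n‖ ^ 2
          = ((a - h + 2 * h - (a - h)) / (2 * Real.pi * |(n : ℝ)|)) ^ 2
            * ((a - h + 2 * h - (a - h)) / (2 * Real.pi * |(n : ℝ)|)) ^ 2
            * ‖fourierCoeffOn hab g2 n‖ ^ 2 := by
            rw [s1, s2]; ring
        _ ≤ (h / Real.pi) ^ 2 * (h / Real.pi) ^ 2 * ‖fourierCoeffOn hab g2 n‖ ^ 2 := by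
            have hsq := pow_le_pow_left₀ hnn1 hKn 2
            have := mul_le_mul hsq hsq (by positivity) (by positivity)
            exact mul_le_mul_of_nonneg_right this (by positivity)
        _ = (h ^ 2 / Real.pi ^ 2) ^ 2 * ‖fourierCoeffOn hab g2 n‖ ^ 2 := by
            rw [div_pow]; ring
  -- Parseval for g and g2
  have hP1 := parseval_interval' (T := 2 * h) (a0 := a - h) hgc (hg_a0.trans hg_b0.symm)
  have hP2 := parseval_interval' (T := 2 * h) (a0 := a - h) hg2c (hg2_a0.trans hg2_b0.symm)
  have hmain := hasSum_le (fun n => hbound n) hP1 (hP2.mul_left ((h ^ 2 / Real.pi ^ 2) ^ 2))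
  -- identify the interval integrals with the integrals over ℝ
  have hnota : a ∉ Set.Ioo a (a + h) := fun hm => absurd hm.1 (lt_irrefl _)
  have hcross0 : ∀ x : ℝ, c x * c (2 * a - x) = 0 := by
    intro x
    rcases lt_trichotomy x a with hx | hx | hx
    · rw [v0 x (fun hm => absurd hm.1 (by linarith)), zero_mul]
    · rw [hx, v0 a hnota, zero_mul]
    · rw [v0 (2 * a - x) (fun hm => absurd hm.1 (by linarith)), mul_zero]
  have hcross2 : ∀ x : ℝ, deriv (deriv c) x * deriv (deriv c) (2 * a - x) = 0 := by
    intro x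
    rcases lt_trichotomy x a with hx | hx | hx
    · rw [v2 x (fun hm => absurd hm.1 (by linarith)), zero_mul]
    · rw [hx, v2 a hnota, zero_mul]
    · rw [v2 (2 * a - x) (fun hm => absurd hm.1 (by linarith)), mul_zero]
  have hnormg : ∀ x : ℝ, ‖g x‖ ^ 2 = c x ^ 2 + c (2 * a - x) ^ 2 := by
    intro x
    have hx : g x = ((c x - c (2 * a - x) : ℝ) : ℂ) := by
      simp [hgdef]
    rw [hx, Complex.norm_real, Real.norm_eq_abs, sq_abs]
    linear_combination (-2 : ℝ) * hcross0 x
  have hnormg2 : ∀ x : ℝ,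
      ‖g2 x‖ ^ 2 = deriv (deriv c) x ^ 2 + deriv (deriv c) (2 * a - x) ^ 2 := by
    intro x
    have hx : g2 x = ((deriv (deriv c) x - deriv (deriv c) (2 * a - x) : ℝ) : ℂ) := by
      simp [hg2def]
    rw [hx, Complex.norm_real, Real.norm_eq_abs, sq_abs]
    linear_combination (-2 : ℝ) * hcross2 x
  have interval_eq : ∀ u : ℝ → ℝ, Continuous u → Function.support u ⊆ Set.Icc a (a + h) →
      (∫ x in (a - h)..(a - h + 2 * h), (u x ^ 2 + u (2 * a - x) ^ 2))
        = 2 * ∫ t, u t ^ 2 := by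
    intro u hu hsu
    have int1 : IntervalIntegrable (fun x => u x ^ 2) MeasureTheory.volume
        (a - h) (a - h + 2 * h) := ((hu.pow 2)).intervalIntegrable _ _
    have int2 : IntervalIntegrable (fun x => u (2 * a - x) ^ 2) MeasureTheory.volume
        (a - h) (a - h + 2 * h) :=
      (((hu.comp (continuous_const.sub continuous_id)).pow 2)).intervalIntegrable _ _
    rw [intervalIntegral.integral_add int1 int2]
    have eflip : (∫ x in (a - h)..(a - h + 2 * h), u (2 * a - x) ^ 2)
        = ∫ x in (a - h)..(a - h + 2 * h), u x ^ 2 := by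
      rw [intervalIntegral.integral_comp_sub_left (fun x => u x ^ 2) (2 * a)]
      rw [show 2 * a - (a - h + 2 * h) = a - h by ring,
        show 2 * a - (a - h) = a - h + 2 * h by ring]
    have esupp : (∫ x in (a - h)..(a - h + 2 * h), u x ^ 2) = ∫ t, u t ^ 2 := by
      apply intervalIntegral.integral_eq_integral_of_support_subset
      intro x hx
      have hux : u x ≠ 0 := by
        intro h0
        exact (Function.mem_support.mp hx) (by simp [h0])
      have hmem := hsu (Function.mem_support.mpr hux)
      exact ⟨by linarith [hmem.1], by linarith [hmem.2]⟩
    rw [eflip, esupp]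
    ring
  have hI1 : (∫ x in (a - h)..(a - h + 2 * h), ‖g x‖ ^ 2) = 2 * ∫ t, c t ^ 2 := by
    rw [← interval_eq c hcont0 hsupp]
    apply intervalIntegral.integral_congr
    intro x _
    exact hnormg x
  have hI2 : (∫ x in (a - h)..(a - h + 2 * h), ‖g2 x‖ ^ 2)
      = 2 * ∫ t, deriv (deriv c) t ^ 2 := by
    rw [← interval_eq (deriv (deriv c)) hcont2 hs2]
    apply intervalIntegral.integral_congr
    intro x _
    exact hnormg2 x
  rw [hI1, hI2] at hmain
  -- conclude
  have hAB : (∫ t, c t ^ 2)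
      ≤ (h ^ 2 / Real.pi ^ 2) ^ 2 * ∫ t, deriv (deriv c) t ^ 2 := by
    have hcancel : (2 * h) * (1 / (2 * h)) = 1 := mul_one_div_cancel (ne_of_gt hT.out)
    nlinarith [mul_le_mul_of_nonneg_left hmain (le_of_lt hT.out)]
  calc Real.sqrt (∫ t, c t ^ 2)
      ≤ Real.sqrt ((h ^ 2 / Real.pi ^ 2) ^ 2 * ∫ t, deriv (deriv c) t ^ 2) :=
        Real.sqrt_le_sqrt hAB
    _ = (h ^ 2 / Real.pi ^ 2) * Real.sqrt (∫ t, deriv (deriv c) t ^ 2) := by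
        rw [Real.sqrt_mul (by positivity), Real.sqrt_sq hKnn]
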